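/- Soundness of C_nᴰ with respect to swap Kripke models: let n ≥ 2; for every set of formulas Γ ∪ {φ} ⊆ For(Σ₁ᴰ), if Γ ⊢_{C_nᴰ} φ then Γ ⊨_{C_nᴰ} φ. -/
import Mathlib


/-- Formulas over the signature Σ₁ᴰ = {∧, ∨, →, ¬, O}, with countably many
propositional variables. -/
inductive Form : Type
  | var : ℕ → Form
  | and : Form → Form → Form
  | or : Form → Form → Form
  | imp : Form → Form → Form
  | neg : Form → Form
  | obl : Form → Form

namespace Form

/-- α⁰ = α, α^{k+1} = ¬(α^k ∧ ¬α^k). -/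
def pow (α : Form) : ℕ → Form
  | 0 => α
  | k + 1 => ((α.pow k).and (α.pow k).neg).neg

/-- α^{(n)} = α¹ ∧ … ∧ αⁿ (for n ≥ 1). -/
def bigPow (α : Form) : ℕ → Form
  | 0 => α.pow 1
  | 1 => α.pow 1
  | m + 2 => (α.bigPow (m + 1)).and (α.pow (m + 2))

/-- ∼^{(n)}α := ¬α ∧ α^{(n)}. -/
def snn (n : ℕ) (α : Form) : Form := α.neg.and (α.bigPow n)

end Form

/-- The n+2 snapshots of the swap structure for C_nᴰ: T_n, t^n_0, …, t^n_{n-1}, F_n. -/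
inductive SVn (n : ℕ) : Type
  | T : SVn n
  | t : Fin n → SVn n
  | F : SVn n
deriving DecidableEq

namespace SVn

/-- The coordinates of a snapshot, as an element of 2^{n+1} (0-indexed):
T_n = (1,0,1,…,1), t^n_i has its unique 0 at (0-indexed) position i+2
(so t^n_{n-1} = (1,…,1)), and F_n = (0,1,…,1). -/
def coord {n : ℕ} : SVn n → Fin (n + 1) → Bool
  | .T, j => decide (j.val ≠ 1)
  | .t i, j => decide (j.val ≠ i.val + 2)
  | .F, j => decide (j.val ≠ 0)

/-- First coordinate z₁. -/
def p1 {n : ℕ} (z : SVn n) : Bool := z.coord 0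

/-- Second coordinate z₂. -/
def p2 {n : ℕ} (z : SVn n) : Bool := z.coord 1

/-- Designated values D_n = A_n ∖ {F_n}, i.e. first coordinate 1. -/
def desig {n : ℕ} (z : SVn n) : Prop := z.p1 = true

/-- Boolean values Boo_n = {T_n, F_n}. -/
def boo {n : ℕ} (z : SVn n) : Prop := z = SVn.T ∨ z = SVn.F

/-- Inconsistent values I_n = A_n ∖ Boo_n. -/
def incons {n : ℕ} (z : SVn n) : Prop := ∃ i : Fin n, z = SVn.t i

end SVn

/-- Boolean implication a ⊃ b. -/
def boolImp (a b : Bool) : Bool := !a || b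

/-- Membership of c in a #̃ b for a binary connective # with Boolean counterpart
`op`: c₁ = a₁ op b₁, and moreover c ∈ Boo_n whenever a, b ∈ Boo_n. -/
def opCond {n : ℕ} (op : Bool → Bool → Bool) (c a b : SVn n) : Prop :=
  c.p1 = op a.p1 b.p1 ∧ (a.boo → b.boo → c.boo)

/-- Swap Kripke pre-model conditions for C_nᴰ on a serial frame (W,R) with
valuations v_w : Form → A_n. -/
structure IsPreModelCnD (n : ℕ) {W : Type} (R : W → W → Prop)
    (v : W → Form → SVn n) : Prop where
  serial : ∀ w, ∃ w', R w w'
  and_ : ∀ w α β, opCond (· && ·) (v w (α.and β)) (v w α) (v w β)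
  or_ : ∀ w α β, opCond (· || ·) (v w (α.or β)) (v w α) (v w β)
  imp_ : ∀ w α β, opCond boolImp (v w (α.imp β)) (v w α) (v w β)
  neg_ : ∀ w α, (v w α.neg).p1 = (v w α).p2 ∧ (v w α.neg).p2 ≤ (v w α).p1
  obl_ : ∀ w α, ((v w α.obl).p1 = true ↔ ∀ w', R w w' → (v w' α).p1 = true)

/-- The RNmatrix restrictions on valuations:
(i) v_w(α) = t^n_0 implies v_w(α ∧ ¬α) = T_n;
(ii) for 1 ≤ k ≤ n−1, v_w(α) = t^n_k implies v_w(α ∧ ¬α) ∈ I_n and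
v_w(α¹) = t^n_{k−1}. -/
def RestrCnD (n : ℕ) {W : Type} (v : W → Form → SVn n) : Prop :=
  (∀ (w : W) (α : Form) (h0 : 0 < n),
      v w α = SVn.t ⟨0, h0⟩ → v w (α.and α.neg) = SVn.T) ∧
  (∀ (w : W) (α : Form) (k : ℕ) (hk : k < n), 1 ≤ k → v w α = SVn.t ⟨k, hk⟩ →
      (v w (α.and α.neg)).incons ∧ v w (α.pow 1) = SVn.t ⟨k - 1, by omega⟩)

/-- A swap Kripke model for C_nᴰ: a pre-model satisfying the restrictions (i), (ii)
and (iii): v_w(α) ∈ Boo_n implies v_w(Oα) ∈ Boo_n. -/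
structure IsModelCnD (n : ℕ) {W : Type} (R : W → W → Prop)
    (v : W → Form → SVn n) : Prop where
  pre : IsPreModelCnD n R v
  restr : RestrCnD n v
  booObl : ∀ w α, (v w α).boo → (v w α.obl).boo

/-- Theorems of the Hilbert calculus C_nᴰ: CPL⁺ axioms, (EM), (cf), (bc_n), (P_n),
(O-K), (D_n), (PO_n), with rules Modus Ponens and O-necessitation. -/
inductive ThmCnD (n : ℕ) : Form → Prop
  | A1 (α β : Form) : ThmCnD n (α.imp (β.imp α))
  | A2 (α β γ : Form) : ThmCnD n ((α.imp (β.imp γ)).imp ((α.imp β).imp (α.imp γ)))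
  | A3 (α β : Form) : ThmCnD n (α.imp (β.imp (α.and β)))
  | A4 (α β : Form) : ThmCnD n ((α.and β).imp α)
  | A5 (α β : Form) : ThmCnD n ((α.and β).imp β)
  | A6 (α β : Form) : ThmCnD n (α.imp (α.or β))
  | A7 (α β : Form) : ThmCnD n (β.imp (α.or β))
  | A8 (α β γ : Form) : ThmCnD n ((α.imp γ).imp ((β.imp γ).imp ((α.or β).imp γ)))
  | A9 (α β : Form) : ThmCnD n (((α.imp β).imp α).imp α)
  | EM (α : Form) : ThmCnD n (α.or α.neg)
  | cf (α : Form) : ThmCnD n (α.neg.neg.imp α)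
  | bcn (α β : Form) : ThmCnD n ((α.bigPow n).imp (α.imp (α.neg.imp β)))
  | Pn (α β : Form) : ThmCnD n (((α.bigPow n).and (β.bigPow n)).imp
      (((α.imp β).bigPow n).and (((α.or β).bigPow n).and ((α.and β).bigPow n))))
  | OK (α β : Form) : ThmCnD n ((α.imp β).obl.imp (α.obl.imp β.obl))
  | Dn (α : Form) : ThmCnD n (α.obl.imp (Form.snn n ((Form.snn n α).obl)))
  | POn (α : Form) : ThmCnD n ((α.bigPow n).imp (α.obl.bigPow n))
  | mp {α β : Form} : ThmCnD n (α.imp β) → ThmCnD n α → ThmCnD n β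
  | nec {α : Form} : ThmCnD n α → ThmCnD n α.obl

/-- conj γ [γ₂,…,γ_k] = γ ∧ γ₂ ∧ … ∧ γ_k -/
def conj (γ : Form) : List Form → Form
  | [] => γ
  | δ :: l => γ.and (conj δ l)

/-- Γ ⊢_{C_nᴰ} φ iff ⊢ φ or ⊢ (γ₁ ∧ … ∧ γ_k) → φ for some γ₁,…,γ_k ∈ Γ, k ≥ 1. -/
def DerivCnD (n : ℕ) (Γ : Set Form) (φ : Form) : Prop :=
  ThmCnD n φ ∨ ∃ (γ : Form) (l : List Form),
    (∀ δ ∈ γ :: l, δ ∈ Γ) ∧ ThmCnD n ((conj γ l).imp φ)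

/-- Γ ⊨_{C_nᴰ} φ : semantic consequence over all swap Kripke models for C_nᴰ. -/
def SemCnD (n : ℕ) (Γ : Set Form) (φ : Form) : Prop :=
  ∀ (W : Type) (R : W → W → Prop) (v : W → Form → SVn n), Nonempty W →
    IsModelCnD n R v → ∀ w : W, (∀ γ ∈ Γ, (v w γ).desig) → (v w φ).desig

section Sound

variable {m : ℕ} {W : Type} {R : W → W → Prop} {v : W → Form → SVn (m + 2)}

@[local simp] lemma p1_T : (SVn.T : SVn (m+2)).p1 = true := by
  simp [SVn.p1, SVn.coord]

@[local simp] lemma p1_t (i : Fin (m+2)) : (SVn.t i : SVn (m+2)).p1 = true := by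
  simp [SVn.p1, SVn.coord]

@[local simp] lemma p1_F : (SVn.F : SVn (m+2)).p1 = false := by
  simp [SVn.p1, SVn.coord]

@[local simp] lemma p2_T : (SVn.T : SVn (m+2)).p2 = false := by
  simp [SVn.p2, SVn.coord]

@[local simp] lemma p2_t (i : Fin (m+2)) : (SVn.t i : SVn (m+2)).p2 = true := by
  simp [SVn.p2, SVn.coord]

@[local simp] lemma p2_F : (SVn.F : SVn (m+2)).p2 = true := by
  simp [SVn.p2, SVn.coord]

lemma bool_le_false {a : Bool} (h : a ≤ false) : a = false := by
  cases a
  · rfl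
  · exact absurd h (by decide)

lemma eq_F_of_p1 {z : SVn (m+2)} (h : z.p1 = false) : z = SVn.F := by
  cases z <;> simp_all

lemma eq_T_of_p1p2 {z : SVn (m+2)} (h1 : z.p1 = true) (h2 : z.p2 = false) :
    z = SVn.T := by
  cases z <;> simp_all

lemma boo_T : (SVn.T : SVn (m+2)).boo := Or.inl rfl
lemma boo_F : (SVn.F : SVn (m+2)).boo := Or.inr rfl

lemma eq_T_of_boo_p1 {z : SVn (m+2)} (hb : z.boo) (h1 : z.p1 = true) :
    z = SVn.T := by
  rcases hb with rfl | rfl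
  · rfl
  · simp at h1

lemma eq_F_of_boo_p1 {z : SVn (m+2)} (hb : z.boo) (h1 : z.p1 ≠ true) :
    z = SVn.F := by
  rcases hb with rfl | rfl
  · simp at h1
  · rfl

namespace SoundAux

variable (hM : IsModelCnD (m+2) R v)
include hM

lemma neg_of_T {w : W} {α : Form} (h : v w α = SVn.T) : v w α.neg = SVn.F := by
  have h1 := (hM.pre.neg_ w α).1
  rw [h] at h1
  exact eq_F_of_p1 (by simp_all)

lemma neg_of_F {w : W} {α : Form} (h : v w α = SVn.F) : v w α.neg = SVn.T := by
  have h1 := (hM.pre.neg_ w α).1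
  have h2 := (hM.pre.neg_ w α).2
  rw [h] at h1 h2
  simp at h1
  have h2' : (v w α.neg).p2 = false := bool_le_false (by simpa using h2)
  exact eq_T_of_p1p2 h1 h2'

lemma pow1_of_boo {w : W} {α : Form} (h : (v w α).boo) :
    v w (α.pow 1) = SVn.T := by
  have hand := hM.pre.and_ w α α.neg
  have hneg := hM.pre.neg_ w (α.and α.neg)
  have hco : v w (α.and α.neg) = SVn.F := by
    rcases h with h | h
    · have hn := neg_of_T hM h
      apply eq_F_of_p1
      rw [hand.1, h, hn]
      simp
    · have hn := neg_of_F hM h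
      apply eq_F_of_p1
      rw [hand.1, h, hn]
      simp
  rw [hco] at hneg
  have hp1 : (v w (α.and α.neg).neg).p1 = true := by
    rw [hneg.1]; simp
  have hp2 : (v w (α.and α.neg).neg).p2 = false :=
    bool_le_false (by simpa using hneg.2)
  show v w ((α.and α.neg).neg) = SVn.T
  exact eq_T_of_p1p2 hp1 hp2

omit hM in
lemma pow_succ_eq (α : Form) (k : ℕ) : α.pow (k+1) = (α.pow k).pow 1 := rfl

omit hM in
lemma pow1_pow (α : Form) (k : ℕ) : (α.pow 1).pow k = α.pow (k+1) := by
  induction k with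
  | zero => rfl
  | succ k ih => show (((α.pow 1).pow k).and _).neg = _; rw [ih]; rfl

lemma pow_of_boo {w : W} {α : Form} (h : (v w α).boo) (k : ℕ) :
    v w (α.pow (k+1)) = SVn.T := by
  induction k with
  | zero => exact pow1_of_boo hM h
  | succ k ih =>
    rw [pow_succ_eq]
    exact pow1_of_boo hM (by rw [ih]; exact boo_T)

lemma bigPow_of_boo {w : W} {α : Form} (h : (v w α).boo) (k : ℕ) :
    v w (α.bigPow k) = SVn.T := by
  induction k with
  | zero => exact pow_of_boo hM h 0
  | succ k ih =>
    cases k with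
    | zero => exact pow_of_boo hM h 0
    | succ j =>
      show v w ((α.bigPow (j+1)).and (α.pow (j+2))) = SVn.T
      have hand := hM.pre.and_ w (α.bigPow (j+1)) (α.pow (j+2))
      rw [ih, pow_of_boo hM h (j+1)] at hand
      refine eq_T_of_boo_p1 (hand.2 boo_T boo_T) ?_
      rw [hand.1]; simp

lemma pow_F_of_t : ∀ (k : ℕ) (α : Form) (w : W) (hk : k < m+2),
    v w α = SVn.t ⟨k, hk⟩ → v w (α.pow (k+1)) = SVn.F := by
  intro k
  induction k with
  | zero =>
    intro α w hk h
    have h1 := hM.restr.1 w α (by omega) h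
    show v w ((α.and α.neg).neg) = SVn.F
    exact neg_of_T hM h1
  | succ k ih =>
    intro α w hk h
    have h2 := (hM.restr.2 w α (k+1) hk (by omega) h).2
    have h3 : v w (α.pow 1) = SVn.t ⟨k, by omega⟩ := by
      rw [h2]
      rfl
    have h4 := ih (α.pow 1) w (by omega) h3
    rw [pow1_pow] at h4
    exact h4

lemma bigPow_p1_false {w : W} {α : Form} {j : ℕ} :
    ∀ (k : ℕ), (v w (α.pow j)).p1 = false → 1 ≤ j → j ≤ k →
      (v w (α.bigPow k)).p1 = false := by
  intro k
  induction k with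
  | zero => intro _ h1 h2; omega
  | succ k ih =>
    intro hp h1 h2
    cases k with
    | zero =>
      have : j = 1 := by omega
      subst this
      exact hp
    | succ i =>
      have hand := hM.pre.and_ w (α.bigPow (i+1)) (α.pow (i+2))
      show (v w ((α.bigPow (i+1)).and (α.pow (i+2)))).p1 = false
      rw [hand.1]
      rcases Nat.lt_or_ge j (i+2) with hj | hj
      · rw [ih hp h1 (by omega)]; simp
      · have : j = i + 2 := by omega
        subst this
        rw [hp]; simp

lemma boo_of_bigPow {w : W} {α : Form}
    (h : (v w (α.bigPow (m+2))).p1 = true) : (v w α).boo := by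
  rcases hz : v w α with _ | i | _
  · exact boo_T
  · exfalso
    have h1 : v w α = SVn.t ⟨i.val, i.isLt⟩ := by rw [hz]
    have h2 := pow_F_of_t hM i.val α w i.isLt h1
    have h3 : (v w (α.pow (i.val+1))).p1 = false := by rw [h2]; simp
    have h4 := bigPow_p1_false hM (m+2) h3 (by omega) (by omega)
    rw [h4] at h; simp at h
  · exact boo_F

lemma snn_of_F {w : W} {α : Form} (h : v w α = SVn.F) :
    v w (Form.snn (m+2) α) = SVn.T := by
  have hand := hM.pre.and_ w α.neg (α.bigPow (m+2))
  have h1 := neg_of_F hM h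
  have h2 := bigPow_of_boo hM (by rw [h]; exact boo_F) (m+2)
  show v w (α.neg.and (α.bigPow (m+2))) = SVn.T
  rw [h1, h2] at hand
  refine eq_T_of_boo_p1 (hand.2 boo_T boo_T) ?_
  rw [hand.1]; simp

lemma snn_of_ne_F {w : W} {α : Form} (h : v w α ≠ SVn.F) :
    v w (Form.snn (m+2) α) = SVn.F := by
  have hand := hM.pre.and_ w α.neg (α.bigPow (m+2))
  apply eq_F_of_p1
  show (v w (α.neg.and (α.bigPow (m+2)))).p1 = false
  rw [hand.1]
  rcases hz : v w α with _ | i | _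
  · rw [(hM.pre.neg_ w α).1, hz]; simp
  · have h1 : v w α = SVn.t ⟨i.val, i.isLt⟩ := by rw [hz]
    have h2 := pow_F_of_t hM i.val α w i.isLt h1
    have h3 : (v w (α.pow (i.val+1))).p1 = false := by rw [h2]; simp
    have h4 := bigPow_p1_false hM (m+2) h3 (by omega) (by omega)
    rw [h4]; simp
  · exact absurd hz h

lemma snn_boo (w : W) (α : Form) : (v w (Form.snn (m+2) α)).boo := by
  by_cases h : v w α = SVn.F
  · rw [snn_of_F hM h]; exact boo_T
  · rw [snn_of_ne_F hM h]; exact boo_F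

lemma thm_valid {ψ : Form} (h : ThmCnD (m+2) ψ) :
    ∀ w : W, (v w ψ).p1 = true := by
  have himp : ∀ (w : W) (α β : Form),
      (v w (α.imp β)).p1 = boolImp (v w α).p1 (v w β).p1 :=
    fun w α β => (hM.pre.imp_ w α β).1
  have hand : ∀ (w : W) (α β : Form),
      (v w (α.and β)).p1 = ((v w α).p1 && (v w β).p1) :=
    fun w α β => (hM.pre.and_ w α β).1
  have hor : ∀ (w : W) (α β : Form),
      (v w (α.or β)).p1 = ((v w α).p1 || (v w β).p1) :=
    fun w α β => (hM.pre.or_ w α β).1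
  have hneg : ∀ (w : W) (α : Form), (v w α.neg).p1 = (v w α).p2 :=
    fun w α => (hM.pre.neg_ w α).1
  induction h with
  | A1 α β =>
    intro w
    simp only [himp]
    cases (v w α).p1 <;> cases (v w β).p1 <;> rfl
  | A2 α β γ =>
    intro w
    simp only [himp]
    cases (v w α).p1 <;> cases (v w β).p1 <;> cases (v w γ).p1 <;> rfl
  | A3 α β =>
    intro w
    simp only [himp, hand]
    cases (v w α).p1 <;> cases (v w β).p1 <;> rfl
  | A4 α β =>
    intro w
    simp only [himp, hand]
    cases (v w α).p1 <;> cases (v w β).p1 <;> rfl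
  | A5 α β =>
    intro w
    simp only [himp, hand]
    cases (v w α).p1 <;> cases (v w β).p1 <;> rfl
  | A6 α β =>
    intro w
    simp only [himp, hor]
    cases (v w α).p1 <;> cases (v w β).p1 <;> rfl
  | A7 α β =>
    intro w
    simp only [himp, hor]
    cases (v w α).p1 <;> cases (v w β).p1 <;> rfl
  | A8 α β γ =>
    intro w
    simp only [himp, hor]
    cases (v w α).p1 <;> cases (v w β).p1 <;> cases (v w γ).p1 <;> rfl
  | A9 α β =>
    intro w
    simp only [himp]
    cases (v w α).p1 <;> cases (v w β).p1 <;> rfl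
  | EM α =>
    intro w
    simp only [hor, hneg]
    cases hz : v w α <;> simp
  | cf α =>
    intro w
    simp only [himp, hneg]
    have h2 := (hM.pre.neg_ w α).2
    cases h : (v w α.neg).p2
    · rfl
    · rw [h] at h2
      have : (v w α).p1 = true := by
        cases hq : (v w α).p1
        · rw [hq] at h2; exact absurd h2 (by decide)
        · rfl
      rw [this]
      cases (v w α.neg).p2 <;> rfl
  | bcn α β =>
    intro w
    simp only [himp, hneg]
    rcases hz : v w α with _ | i | _
    · simp [boolImp]
    · have h1 : v w α = SVn.t ⟨i.val, i.isLt⟩ := by rw [hz]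
      have h2 := pow_F_of_t hM i.val α w i.isLt h1
      have h3 : (v w (α.pow (i.val+1))).p1 = false := by rw [h2]; simp
      have h4 := bigPow_p1_false hM (m+2) h3 (by omega) (by omega)
      rw [h4]; rfl
    · simp [boolImp]
  | Pn α β =>
    intro w
    simp only [himp, hand]
    cases ha : (v w (α.bigPow (m+2))).p1
    · rfl
    · cases hb : (v w (β.bigPow (m+2))).p1
      · rfl
      · have hba := boo_of_bigPow hM ha
        have hbb := boo_of_bigPow hM hb
        have h1 := bigPow_of_boo hM ((hM.pre.imp_ w α β).2 hba hbb) (m+2)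
        have h2 := bigPow_of_boo hM ((hM.pre.or_ w α β).2 hba hbb) (m+2)
        have h3 := bigPow_of_boo hM ((hM.pre.and_ w α β).2 hba hbb) (m+2)
        rw [h1, h2, h3]; rfl
  | OK α β =>
    intro w
    simp only [himp]
    cases h1 : (v w (α.imp β).obl).p1
    · rfl
    · cases h2 : (v w α.obl).p1
      · rfl
      · have h3 : (v w β.obl).p1 = true := by
          rw [hM.pre.obl_ w β]
          intro w' hw'
          have h4 := (hM.pre.obl_ w (α.imp β)).1 h1 w' hw'
          have h5 := (hM.pre.obl_ w α).1 h2 w' hw'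
          rw [himp, h5] at h4
          cases hq : (v w' β).p1
          · rw [hq] at h4; simp [boolImp] at h4
          · rfl
        rw [h3]; rfl
  | Dn α =>
    intro w
    simp only [himp]
    cases h1 : (v w α.obl).p1
    · rfl
    · have hF : v w (Form.snn (m+2) α).obl = SVn.F := by
        apply eq_F_of_boo_p1 (hM.booObl w _ (snn_boo hM w α))
        intro hco
        obtain ⟨w', hw'⟩ := hM.pre.serial w
        have h2 := (hM.pre.obl_ w α).1 h1 w' hw'
        have h3 : v w' α ≠ SVn.F := by
          intro h; rw [h] at h2; simp at h2
        have h4 := snn_of_ne_F hM h3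
        have h5 := (hM.pre.obl_ w (Form.snn (m+2) α)).1 hco w' hw'
        rw [h4] at h5; simp at h5
      have h6 := snn_of_F hM hF
      rw [h6]; rfl
  | POn α =>
    intro w
    simp only [himp]
    cases ha : (v w (α.bigPow (m+2))).p1
    · rfl
    · have hba := boo_of_bigPow hM ha
      have hbo := hM.booObl w α hba
      have h1 := bigPow_of_boo hM hbo (m+2)
      rw [h1]; rfl
  | mp h1 h2 ih1 ih2 =>
    intro w
    have ha := ih1 w
    have hb := ih2 w
    rw [himp, hb] at ha
    cases hq : (v w _).p1
    · rw [hq] at ha; simp [boolImp] at ha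
    · rfl
  | nec h ih =>
    intro w
    exact (hM.pre.obl_ w _).2 (fun w' _ => ih w')

lemma conj_p1 {w : W} : ∀ (l : List Form) (γ : Form),
    (∀ δ ∈ γ :: l, (v w δ).p1 = true) → (v w (conj γ l)).p1 = true := by
  intro l
  induction l with
  | nil => intro γ h; exact h γ (by simp)
  | cons δ l ih =>
    intro γ h
    show (v w (γ.and (conj δ l))).p1 = true
    rw [(hM.pre.and_ w γ (conj δ l)).1]
    rw [h γ (by simp), ih δ (fun ε hε => h ε (List.mem_cons_of_mem γ hε))]
    rfl

end SoundAux

end Sound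

/-- Soundness of C_nᴰ (n ≥ 2) w.r.t. swap Kripke models. -/
theorem CnD_soundness (n : ℕ) (hn : 2 ≤ n) (Γ : Set Form) (φ : Form) :
    DerivCnD n Γ φ → SemCnD n Γ φ := by
  obtain ⟨m, rfl⟩ : ∃ m, n = m + 2 := ⟨n - 2, by omega⟩
  intro hder W R v _ hM w hΓ
  rcases hder with h | ⟨γ, l, hmem, hthm⟩
  · exact SoundAux.thm_valid hM h w
  · have h1 := SoundAux.thm_valid hM hthm w
    have h2 := SoundAux.conj_p1 hM l γ (fun δ hδ => hΓ δ (hmem δ hδ))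
    rw [(hM.pre.imp_ w (conj γ l) φ).1, h2] at h1
    show (v w φ).p1 = true
    cases hq : (v w φ).p1
    · rw [hq] at h1; simp [boolImp] at h1
    · rfl
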